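/- A tuple (ȳ, s̄, λ̄, μ̄s) ∈ ℝ^N × ℝ × ℝ × ℝ satisfies the KKT system: qᵢ·ȳᵢ + c₀ᵢ + λ̄ = 0 for all i; λmax − λ̄ − μ̄s = 0; Σᵢ ȳᵢ − Σᵢ aᵢ = s̄; μ̄s ≥ 0; s̄ ≥ 0; μ̄s·s̄ = 0, if and only if λ̄ satisfies the scalar linear complementarity relation Σᵢ (φ(λ̄)ᵢ − aᵢ) ≥ 0, λmax − λ̄ ≥ 0, (Σᵢ (φ(λ̄)ᵢ − aᵢ))·(λmax − λ̄) = 0, and moreover ȳᵢ = φ(λ̄)ᵢ for all i, s̄ = Σᵢ (φ(λ̄)ᵢ − aᵢ), and μ̄s = λmax − λ̄. In particular, such a tuple is unique. -/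

import Mathlib

/-- A tuple satisfies the KKT system of the modified primal problem iff its price component
solves the scalar linear complementarity relation and the other components take the stated closed
forms; in particular the KKT tuple is unique. -/
theorem stmt_8 (N : ℕ) (hN : 0 < N) (q c₀ a : Fin N → ℝ) (hq : ∀ i, 0 < q i)
    (lamMax : ℝ) (φ : ℝ → Fin N → ℝ)
    (hφ : ∀ lam i, φ lam i = -(lam + c₀ i) / q i) :
    (∀ (yBar : Fin N → ℝ) (sBar lamBar muS : ℝ),
        ((∀ i, q i * yBar i + c₀ i + lamBar = 0) ∧
            lamMax - lamBar - muS = 0 ∧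
            (∑ i, yBar i) - (∑ i, a i) = sBar ∧
            0 ≤ muS ∧ 0 ≤ sBar ∧ muS * sBar = 0) ↔
          ((0 ≤ ∑ i, (φ lamBar i - a i) ∧ 0 ≤ lamMax - lamBar ∧
              (∑ i, (φ lamBar i - a i)) * (lamMax - lamBar) = 0) ∧
            (∀ i, yBar i = φ lamBar i) ∧
            sBar = ∑ i, (φ lamBar i - a i) ∧
            muS = lamMax - lamBar)) ∧
      (∀ (y1 : Fin N → ℝ) (s1 l1 m1 : ℝ) (y2 : Fin N → ℝ) (s2 l2 m2 : ℝ),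
        ((∀ i, q i * y1 i + c₀ i + l1 = 0) ∧ lamMax - l1 - m1 = 0 ∧
            (∑ i, y1 i) - (∑ i, a i) = s1 ∧ 0 ≤ m1 ∧ 0 ≤ s1 ∧ m1 * s1 = 0) →
        ((∀ i, q i * y2 i + c₀ i + l2 = 0) ∧ lamMax - l2 - m2 = 0 ∧
            (∑ i, y2 i) - (∑ i, a i) = s2 ∧ 0 ≤ m2 ∧ 0 ≤ s2 ∧ m2 * s2 = 0) →
        y1 = y2 ∧ s1 = s2 ∧ l1 = l2 ∧ m1 = m2) := by
  have key : ∀ (yBar : Fin N → ℝ) (sBar lamBar muS : ℝ),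
      ((∀ i, q i * yBar i + c₀ i + lamBar = 0) ∧
          lamMax - lamBar - muS = 0 ∧
          (∑ i, yBar i) - (∑ i, a i) = sBar ∧
          0 ≤ muS ∧ 0 ≤ sBar ∧ muS * sBar = 0) ↔
        ((0 ≤ ∑ i, (φ lamBar i - a i) ∧ 0 ≤ lamMax - lamBar ∧
            (∑ i, (φ lamBar i - a i)) * (lamMax - lamBar) = 0) ∧
          (∀ i, yBar i = φ lamBar i) ∧
          sBar = ∑ i, (φ lamBar i - a i) ∧
          muS = lamMax - lamBar) := by
    intro yBar sBar lamBar muS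
    constructor
    · rintro ⟨h1, h2, h3, h4, h5, h6⟩
      have hy : ∀ i, yBar i = φ lamBar i := by
        intro i
        rw [hφ]
        have := h1 i
        have hqi := (hq i).ne'
        field_simp
        linarith
      have hmu : muS = lamMax - lamBar := by linarith
      have hs : sBar = ∑ i, (φ lamBar i - a i) := by
        rw [Finset.sum_sub_distrib, ← h3]
        congr 1
        exact Finset.sum_congr rfl fun i _ => hy i
      refine ⟨⟨hs ▸ h5, hmu ▸ h4, ?_⟩, hy, hs, hmu⟩
      rw [← hs, ← hmu, mul_comm]; exact h6
    · rintro ⟨⟨h1, h2, h3⟩, hy, hs, hmu⟩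
      refine ⟨?_, by linarith, ?_, by linarith, by linarith, ?_⟩
      · intro i
        rw [hy i, hφ]
        have hqi := (hq i).ne'
        field_simp
        ring
      · rw [hs, Finset.sum_sub_distrib, Finset.sum_congr rfl fun i _ => hy i]
      · rw [hs, hmu, mul_comm]; exact h3
  refine ⟨key, ?_⟩
  intro y1 s1 l1 m1 y2 s2 l2 m2 H1 H2
  rw [key] at H1 H2
  obtain ⟨⟨g1, t1, p1⟩, hy1, hs1, hm1⟩ := H1
  obtain ⟨⟨g2, t2, p2⟩, hy2, hs2, hm2⟩ := H2
  have hmono : ∀ u v : ℝ, u < v →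
      (∑ i, (φ v i - a i)) < (∑ i, (φ u i - a i)) := by
    intro u v huv
    apply Finset.sum_lt_sum_of_nonempty
    · exact Finset.univ_nonempty_iff.mpr ⟨⟨0, hN⟩⟩
    · intro i _
      rw [hφ, hφ]
      have hqi := hq i
      have : -(v + c₀ i) / q i < -(u + c₀ i) / q i := by
        apply div_lt_div_of_pos_right _ hqi
        linarith
      linarith
  have hl : l1 = l2 := by
    by_contra hne
    rcases lt_or_gt_of_ne hne with h | h
    · have hg1 : 0 < ∑ i, (φ l1 i - a i) := lt_of_le_of_lt g2 (hmono l1 l2 h)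
      have : lamMax - l1 = 0 := by
        rcases mul_eq_zero.mp p1 with h' | h'
        · exact absurd h' hg1.ne'
        · exact h'
      linarith
    · have hg2 : 0 < ∑ i, (φ l2 i - a i) := lt_of_le_of_lt g1 (hmono l2 l1 h)
      have : lamMax - l2 = 0 := by
        rcases mul_eq_zero.mp p2 with h' | h'
        · exact absurd h' hg2.ne'
        · exact h'
      linarith
  subst hl
  refine ⟨funext fun i => (hy1 i).trans (hy2 i).symm, hs1.trans hs2.symm, rfl, hm1.trans hm2.symm⟩
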